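/- arXiv:2011.11899 — 2 statements merged into one kernel-verified Lean document; each statement's English description precedes it below -/
import Mathlib

section
/- Assume condition (★) holds for every x ∈ V∪∂V. Then the function g^w : {0,1}^{E∪∂E} → (0,∞) defined by g^w(ω) = Π_{C : C∩∂V=∅} Σ_{m=1}^q exp(β Σ_{x∈C} h_{x,m}) · Π_{C : C∩∂V≠∅} exp(β Σ_{x∈C} h_{x,max}), the products running over the open clusters C of ω, is monotone decreasing: if ω ⪯ ω′ then g^w(ω′) ≤ g^w(ω). -/
open Classical Finset

noncomputable section

/-- Two vertices are joined by an open edge of the configuration `ω`. -/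
def OpenAdj {V E : Type*} (ends : E → V × V) (ω : E → Bool) (x y : V) : Prop :=
  ∃ e, ω e = true ∧ (ends e = (x, y) ∨ ends e = (y, x))

/-- `x` and `y` lie in the same open cluster of the configuration `ω`. -/
def ConnIn {V E : Type*} (ends : E → V × V) (ω : E → Bool) (x y : V) : Prop :=
  Relation.ReflTransGen (OpenAdj ends ω) x y

/-- The open cluster of the vertex `x` in the configuration `ω`. -/
def cluster {V E : Type*} [Fintype V] (ends : E → V × V) (ω : E → Bool) (x : V) : Finset V :=
  Finset.univ.filter fun y => ConnIn ends ω x y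

/-- The collection of all open clusters of the configuration `ω`
(the vertex sets of the connected components of the open subgraph). -/
def clusters {V E : Type*} [Fintype V] (ends : E → V × V) (ω : E → Bool) :
    Finset (Finset V) :=
  Finset.univ.image fun x => cluster ends ω x

/-- The free cluster weight `Θ^f[C] = Σ_{m=1}^q exp(β Σ_{x∈C} h_{x,m})`. -/
def thetaF {V : Type*} (q : ℕ) (β : ℝ) (h : V → Fin q → ℝ) (C : Finset V) : ℝ :=
  ∑ m : Fin q, Real.exp (β * ∑ x ∈ C, h x m)

/-- The max-wired cluster weight: `Θ^f[C]` for clusters not touching the boundary `Vb`,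
and `exp(β Σ_{x∈C} hmax x)` for clusters touching the boundary. -/
def thetaW {V : Type*} (q : ℕ) (β : ℝ) (h : V → Fin q → ℝ) (hmax : V → ℝ)
    (Vb : Finset V) (C : Finset V) : ℝ :=
  if C ∩ Vb = ∅ then thetaF q β h C else Real.exp (β * ∑ x ∈ C, hmax x)

/-- The function `g^f(ω) = Π_C Θ^f[C]`, the product over the open clusters of `ω`. -/
def gFree {V E : Type*} [Fintype V] (ends : E → V × V) (q : ℕ) (β : ℝ)
    (h : V → Fin q → ℝ) (ω : E → Bool) : ℝ :=
  ∏ C ∈ clusters ends ω, thetaF q β h C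

/-- The function `g^w(ω) = Π_C Θ^w[C]`, the product over the open clusters of `ω`. -/
def gWired {V E : Type*} [Fintype V] (ends : E → V × V) (q : ℕ) (β : ℝ)
    (h : V → Fin q → ℝ) (hmax : V → ℝ) (Vb : Finset V) (ω : E → Bool) : ℝ :=
  ∏ C ∈ clusters ends ω, thetaW q β h hmax Vb C

/-- The edge factor `Π_e (exp(qβJ_e) − 1)^{ω_e}`. -/
def edgeFactor {E : Type*} [Fintype E] (q : ℕ) (β : ℝ) (J : E → ℝ) (ω : E → Bool) : ℝ :=
  ∏ e : E, if ω e then Real.exp ((q : ℝ) * β * J e) - 1 else 1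

/-- The unnormalised weight of the free random-cluster measure. -/
def freeWeight {V E : Type*} [Fintype V] [Fintype E] (ends : E → V × V) (q : ℕ) (β : ℝ)
    (J : E → ℝ) (h : V → Fin q → ℝ) (ω : E → Bool) : ℝ :=
  edgeFactor q β J ω * gFree ends q β h ω

/-- The expectation `φ^f_{G;β,q,ĥ}(f)` under the free random-cluster measure. -/
def freeExp {V E : Type*} [Fintype V] [Fintype E] (ends : E → V × V) (q : ℕ) (β : ℝ)
    (J : E → ℝ) (h : V → Fin q → ℝ) (f : (E → Bool) → ℝ) : ℝ :=
  (∑ ω : E → Bool, f ω * freeWeight ends q β J h ω) /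
    ∑ ω : E → Bool, freeWeight ends q β J h ω

/-- The unnormalised weight of the max-wired random-cluster measure: supported on
configurations opening all boundary edges `Eb`, with edge factor over interior edges
and cluster weights `Θ^w`. -/
def wiredWeight {V E : Type*} [Fintype V] [Fintype E] (ends : E → V × V) (q : ℕ) (β : ℝ)
    (J : E → ℝ) (h : V → Fin q → ℝ) (hmax : V → ℝ) (Vb : Finset V) (Eb : Finset E)
    (ω : E → Bool) : ℝ :=
  (if ∀ e ∈ Eb, ω e = true then (1 : ℝ) else 0) *
    (∏ e ∈ Ebᶜ, if ω e then Real.exp ((q : ℝ) * β * J e) - 1 else 1) *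
    gWired ends q β h hmax Vb ω

/-- The expectation `φ^w_{G;β,q,ĥ}(f)` under the max-wired random-cluster measure. -/
def wiredExp {V E : Type*} [Fintype V] [Fintype E] (ends : E → V × V) (q : ℕ) (β : ℝ)
    (J : E → ℝ) (h : V → Fin q → ℝ) (hmax : V → ℝ) (Vb : Finset V) (Eb : Finset E)
    (f : (E → Bool) → ℝ) : ℝ :=
  (∑ ω : E → Bool, f ω * wiredWeight ends q β J h hmax Vb Eb ω) /
    ∑ ω : E → Bool, wiredWeight ends q β J h hmax Vb Eb ω

/-- The expectation under the Bernoulli product measure in which each edge `e` is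
independently open with probability `p_e = 1 − exp(−qβJ_e)`. -/
def bernExp {E : Type*} [Fintype E] (q : ℕ) (β : ℝ) (J : E → ℝ)
    (f : (E → Bool) → ℝ) : ℝ :=
  ∑ ω : E → Bool, f ω *
    ∏ e : E, if ω e then 1 - Real.exp (-((q : ℝ) * β * J e))
      else Real.exp (-((q : ℝ) * β * J e))

/-- A function of configurations is increasing for the coordinatewise order. -/
def IncreasingFn {E : Type*} (f : (E → Bool) → ℝ) : Prop :=
  ∀ ⦃ω ω' : E → Bool⦄, (∀ e, ω e ≤ ω' e) → f ω ≤ f ω'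

/-- Condition (★): there is a common colour `m*` attaining the maximal field
value `h_{x,max}` at every vertex `x`. -/
def StarCond {V : Type*} (q : ℕ) (h : V → Fin q → ℝ) : Prop :=
  ∃ m : Fin q, ∀ x k, h x k ≤ h x m

/-- Compatibility of the boundary data: every boundary edge joins an interior vertex to a
boundary vertex, and every interior edge joins two interior vertices (this is the structure
of `E ∪ ∂E` for a finite subgraph `G = (V,E)` of the hypercubic lattice, with `Vb = ∂V`
and `Eb = ∂E`). -/
def BdryCompatible {V E : Type*} (ends : E → V × V) (Vb : Finset V) (Eb : Finset E) : Prop :=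
  (∀ e ∈ Eb, ((ends e).1 ∈ Vb ∧ (ends e).2 ∉ Vb) ∨ ((ends e).1 ∉ Vb ∧ (ends e).2 ∈ Vb)) ∧
    ∀ e ∉ Eb, (ends e).1 ∉ Vb ∧ (ends e).2 ∉ Vb

/-- Indicator of the event `{x ↔ y}`. -/
def connInd {V E : Type*} (ends : E → V × V) (x y : V) (ω : E → Bool) : ℝ :=
  if ConnIn ends ω x y then 1 else 0

/-- Indicator of the event `{x ↔ S}` that some vertex of `S` lies in the open cluster
of `x`. -/
def connToSetInd {V E : Type*} (ends : E → V × V) (x : V) (S : Finset V)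
    (ω : E → Bool) : ℝ :=
  if ∃ y ∈ S, ConnIn ends ω x y then 1 else 0


section Conn
variable {V E : Type*} (ends : E → V × V) {ω ω' : E → Bool} {a b c x y : V}

lemma openAdj_symm (h : OpenAdj ends ω a b) : OpenAdj ends ω b a := by
  obtain ⟨e, he, hee⟩ := h; exact ⟨e, he, hee.symm⟩

lemma connIn_refl : ConnIn ends ω a a := Relation.ReflTransGen.refl

lemma connIn_symm (h : ConnIn ends ω a b) : ConnIn ends ω b a :=
  by haveI : Std.Symm (OpenAdj ends ω) := ⟨fun _ _ => openAdj_symm ends⟩; exact (Relation.ReflTransGen.stdSymm (r := OpenAdj ends ω)).symm _ _ h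

lemma connIn_trans (h : ConnIn ends ω a b) (h' : ConnIn ends ω b c) : ConnIn ends ω a c :=
  Relation.ReflTransGen.trans h h'

lemma connIn_mono (hle : ∀ e, ω e ≤ ω' e) (h : ConnIn ends ω a b) : ConnIn ends ω' a b := by
  refine Relation.ReflTransGen.mono (p := OpenAdj ends ω') ?_ a b h
  rintro u v ⟨e, he, hee⟩
  refine ⟨e, ?_, hee⟩
  have := hle e; rw [he] at this
  exact (le_antisymm this (Bool.le_true _)).symm

lemma connIn_update_iff (σ : E → Bool) (e : E) (hx : (ends e).1 = x) (hy : (ends e).2 = y) :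
    ConnIn ends (Function.update σ e true) a b ↔
      ConnIn ends σ a b ∨ (ConnIn ends σ a x ∧ ConnIn ends σ y b) ∨
        (ConnIn ends σ a y ∧ ConnIn ends σ x b) := by
  constructor
  · intro h
    induction h with
    | refl => exact Or.inl (connIn_refl ends)
    | @tail c d hac step ih =>
      obtain ⟨f, hf, hee⟩ := step
      by_cases hfe : f = e
      · subst hfe
        have hxy : (c = x ∧ d = y) ∨ (c = y ∧ d = x) := by
          rcases hee with hh | hh
          · exact Or.inl ⟨by rw [← hx, hh], by rw [← hy, hh]⟩
          · exact Or.inr ⟨by rw [← hy, hh], by rw [← hx, hh]⟩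
        rcases hxy with ⟨rfl, rfl⟩ | ⟨rfl, rfl⟩
        · rcases ih with h1 | ⟨h1, h2⟩ | ⟨h1, h2⟩
          · exact Or.inr (Or.inl ⟨h1, connIn_refl ends⟩)
          · exact Or.inl (connIn_trans ends h1 (connIn_symm ends h2))
          · exact Or.inl h1
        · rcases ih with h1 | ⟨h1, h2⟩ | ⟨h1, h2⟩
          · exact Or.inr (Or.inr ⟨h1, connIn_refl ends⟩)
          · exact Or.inl h1
          · exact Or.inl (connIn_trans ends h1 (connIn_symm ends h2))
      · have hof : OpenAdj ends σ c d := ⟨f, by rwa [Function.update_of_ne hfe] at hf, hee⟩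
        rcases ih with h1 | ⟨h1, h2⟩ | ⟨h1, h2⟩
        · exact Or.inl (h1.tail hof)
        · exact Or.inr (Or.inl ⟨h1, h2.tail hof⟩)
        · exact Or.inr (Or.inr ⟨h1, h2.tail hof⟩)
  · have hmono : ∀ {u v : V}, ConnIn ends σ u v →
        ConnIn ends (Function.update σ e true) u v := fun h =>
      connIn_mono ends (fun f => by
        by_cases hfe : f = e
        · subst hfe; simp
        · rw [Function.update_of_ne hfe]) h
    have hxy : ConnIn ends (Function.update σ e true) x y :=
      Relation.ReflTransGen.single ⟨e, Function.update_self e true σ,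
        Or.inl (by rw [← hx, ← hy])⟩
    rintro (h1 | ⟨h1, h2⟩ | ⟨h1, h2⟩)
    · exact hmono h1
    · exact connIn_trans ends (connIn_trans ends (hmono h1) hxy) (hmono h2)
    · exact connIn_trans ends (connIn_trans ends (hmono h1)
        (connIn_symm ends hxy)) (hmono h2)

lemma mem_cluster_iff [Fintype V] : b ∈ cluster ends ω a ↔ ConnIn ends ω a b := by
  simp [cluster]

lemma cluster_eq_of_connIn [Fintype V] (h : ConnIn ends ω a b) :
    cluster ends ω a = cluster ends ω b := by
  ext z
  simp only [mem_cluster_iff]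
  exact ⟨fun hz => connIn_trans ends (connIn_symm ends h) hz,
    fun hz => connIn_trans ends h hz⟩

end Conn


section Theta
variable {V : Type*} {q : ℕ} {β : ℝ} {h : V → Fin q → ℝ} {hmax : V → ℝ} {Vb : Finset V}

lemma thetaF_pos (m0 : Fin q) (C : Finset V) : 0 < thetaF q β h C :=
  Finset.sum_pos (fun m _ => Real.exp_pos _) ⟨m0, Finset.mem_univ m0⟩

lemma thetaW_pos (m0 : Fin q) (C : Finset V) : 0 < thetaW q β h hmax Vb C := by
  unfold thetaW
  split
  · exact thetaF_pos m0 C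
  · exact Real.exp_pos _

lemma exp_max_le_thetaF (m0 : Fin q) (hm0 : ∀ x, h x m0 = hmax x) (C : Finset V) :
    Real.exp (β * ∑ x ∈ C, hmax x) ≤ thetaF q β h C := by
  have : Real.exp (β * ∑ x ∈ C, hmax x) = Real.exp (β * ∑ x ∈ C, h x m0) := by
    simp [hm0]
  rw [this]
  exact Finset.single_le_sum (f := fun m : Fin q => Real.exp (β * ∑ x ∈ C, h x m))
    (fun m _ => (Real.exp_pos _).le) (Finset.mem_univ m0)

lemma thetaF_union_le (C D : Finset V) (hCD : Disjoint C D) :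
    thetaF q β h (C ∪ D) ≤ thetaF q β h C * thetaF q β h D := by
  unfold thetaF
  rw [Finset.sum_mul_sum]
  have key : ∀ m : Fin q, Real.exp (β * ∑ x ∈ C ∪ D, h x m) =
      Real.exp (β * ∑ x ∈ C, h x m) * Real.exp (β * ∑ x ∈ D, h x m) := by
    intro m
    rw [Finset.sum_union hCD, mul_add, Real.exp_add]
  calc ∑ m : Fin q, Real.exp (β * ∑ x ∈ C ∪ D, h x m)
      = ∑ m : Fin q, Real.exp (β * ∑ x ∈ C, h x m) * Real.exp (β * ∑ x ∈ D, h x m) := by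
        simp only [key]
    _ ≤ ∑ m : Fin q, ∑ k : Fin q,
          Real.exp (β * ∑ x ∈ C, h x m) * Real.exp (β * ∑ x ∈ D, h x k) := by
        refine Finset.sum_le_sum fun m _ => ?_
        exact Finset.single_le_sum
          (f := fun k : Fin q => Real.exp (β * ∑ x ∈ C, h x m) * Real.exp (β * ∑ x ∈ D, h x k))
          (fun k _ => mul_nonneg (Real.exp_pos _).le (Real.exp_pos _).le) (Finset.mem_univ m)

lemma thetaW_union_le (m0 : Fin q) (hm0 : ∀ x, h x m0 = hmax x)
    (C D : Finset V) (hCD : Disjoint C D) :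
    thetaW q β h hmax Vb (C ∪ D) ≤ thetaW q β h hmax Vb C * thetaW q β h hmax Vb D := by
  have hsplit : (C ∪ D) ∩ Vb = ∅ ↔ (C ∩ Vb = ∅ ∧ D ∩ Vb = ∅) := by
    rw [Finset.union_inter_distrib_right, Finset.union_eq_empty]
  have hexp : Real.exp (β * ∑ x ∈ C ∪ D, hmax x) =
      Real.exp (β * ∑ x ∈ C, hmax x) * Real.exp (β * ∑ x ∈ D, hmax x) := by
    rw [Finset.sum_union hCD, mul_add, Real.exp_add]
  unfold thetaW
  by_cases hC : C ∩ Vb = ∅ <;> by_cases hD : D ∩ Vb = ∅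
  · rw [if_pos (hsplit.mpr ⟨hC, hD⟩), if_pos hC, if_pos hD]
    exact thetaF_union_le C D hCD
  · rw [if_neg (fun hh => hD (hsplit.mp hh).2), if_pos hC, if_neg hD, hexp]
    exact mul_le_mul_of_nonneg_right (exp_max_le_thetaF m0 hm0 C) (Real.exp_pos _).le
  · rw [if_neg (fun hh => hC (hsplit.mp hh).1), if_neg hC, if_pos hD, hexp]
    exact mul_le_mul_of_nonneg_left (exp_max_le_thetaF m0 hm0 D) (Real.exp_pos _).le
  · rw [if_neg (fun hh => hC (hsplit.mp hh).1), if_neg hC, if_neg hD, hexp]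

end Theta

section Step
variable {V E : Type*} [Fintype V] (ends : E → V × V) {q : ℕ} {β : ℝ}
  {h : V → Fin q → ℝ} {hmax : V → ℝ} {Vb : Finset V}

lemma gWired_update_le (m0 : Fin q) (hm0 : ∀ x, h x m0 = hmax x)
    (σ : E → Bool) (e : E) :
    gWired ends q β h hmax Vb (Function.update σ e true) ≤
      gWired ends q β h hmax Vb σ := by
  set x := (ends e).1 with hx
  set y := (ends e).2 with hy
  set ω' := Function.update σ e true with hω'
  have hiff : ∀ a b : V, ConnIn ends ω' a b ↔
      ConnIn ends σ a b ∨ (ConnIn ends σ a x ∧ ConnIn ends σ y b) ∨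
        (ConnIn ends σ a y ∧ ConnIn ends σ x b) :=
    fun a b => connIn_update_iff ends σ e hx.symm hy.symm
  by_cases hxy : ConnIn ends σ x y
  · -- clusters unchanged
    have hsame : ∀ a b : V, ConnIn ends ω' a b ↔ ConnIn ends σ a b := by
      intro a b
      rw [hiff]
      constructor
      · rintro (h1 | ⟨h1, h2⟩ | ⟨h1, h2⟩)
        · exact h1
        · exact connIn_trans ends (connIn_trans ends h1 hxy) h2
        · exact connIn_trans ends (connIn_trans ends h1 (connIn_symm ends hxy)) h2
      · exact Or.inl
    have : clusters ends ω' = clusters ends σ := by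
      unfold clusters
      congr 1
      funext z
      ext w
      simp only [mem_cluster_iff, hsame]
    unfold gWired
    rw [this]
  · set Cx := cluster ends σ x with hCx
    set Cy := cluster ends σ y with hCy
    set D := Cx ∪ Cy with hD
    have hxCx : x ∈ Cx := (mem_cluster_iff ends).mpr (connIn_refl ends)
    have hyCy : y ∈ Cy := (mem_cluster_iff ends).mpr (connIn_refl ends)
    have hyCx : y ∉ Cx := fun hh => hxy ((mem_cluster_iff ends).mp hh)
    have hne : Cx ≠ Cy := fun hh => hyCx (hh ▸ hyCy)
    have hdisj : Disjoint Cx Cy := by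
      rw [Finset.disjoint_left]
      intro z hz hz'
      exact hxy (connIn_trans ends ((mem_cluster_iff ends).mp hz)
        (connIn_symm ends ((mem_cluster_iff ends).mp hz')))
    have hclD : ∀ z ∈ D, cluster ends ω' z = D := by
      intro z hz
      ext w
      rw [mem_cluster_iff, hiff]
      rcases Finset.mem_union.mp hz with hzx | hzy
      · have hxz : ConnIn ends σ x z := (mem_cluster_iff ends).mp hzx
        constructor
        · rintro (h1 | ⟨h1, h2⟩ | ⟨h1, h2⟩)
          · exact Finset.mem_union_left _ ((mem_cluster_iff ends).mpr
              (connIn_trans ends hxz h1))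
          · exact Finset.mem_union_right _ ((mem_cluster_iff ends).mpr h2)
          · exact Finset.mem_union_left _ ((mem_cluster_iff ends).mpr h2)
        · intro hw
          rcases Finset.mem_union.mp hw with hwx | hwy
          · exact Or.inl (connIn_trans ends (connIn_symm ends hxz)
              ((mem_cluster_iff ends).mp hwx))
          · exact Or.inr (Or.inl ⟨connIn_symm ends hxz, (mem_cluster_iff ends).mp hwy⟩)
      · have hyz : ConnIn ends σ y z := (mem_cluster_iff ends).mp hzy
        constructor
        · rintro (h1 | ⟨h1, h2⟩ | ⟨h1, h2⟩)
          · exact Finset.mem_union_right _ ((mem_cluster_iff ends).mpr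
              (connIn_trans ends hyz h1))
          · exact Finset.mem_union_right _ ((mem_cluster_iff ends).mpr h2)
          · exact Finset.mem_union_left _ ((mem_cluster_iff ends).mpr h2)
        · intro hw
          rcases Finset.mem_union.mp hw with hwx | hwy
          · exact Or.inr (Or.inr ⟨connIn_symm ends hyz, (mem_cluster_iff ends).mp hwx⟩)
          · exact Or.inl (connIn_trans ends (connIn_symm ends hyz)
              ((mem_cluster_iff ends).mp hwy))
    have hclO : ∀ z, z ∉ D → cluster ends ω' z = cluster ends σ z := by
      intro z hz
      have hzx : ¬ ConnIn ends σ x z := fun hh =>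
        hz (Finset.mem_union_left _ ((mem_cluster_iff ends).mpr hh))
      have hzy : ¬ ConnIn ends σ y z := fun hh =>
        hz (Finset.mem_union_right _ ((mem_cluster_iff ends).mpr hh))
      ext w
      rw [mem_cluster_iff, mem_cluster_iff, hiff]
      constructor
      · rintro (h1 | ⟨h1, h2⟩ | ⟨h1, h2⟩)
        · exact h1
        · exact absurd (connIn_symm ends h1) hzx
        · exact absurd (connIn_symm ends h1) hzy
      · exact Or.inl
    have hDnot : D ∉ clusters ends σ := by
      intro hh
      obtain ⟨z, _, hz⟩ := Finset.mem_image.mp hh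
      have hzx : ConnIn ends σ z x := (mem_cluster_iff ends).mp
        (hz ▸ Finset.mem_union_left _ hxCx)
      have hzy : ConnIn ends σ z y := (mem_cluster_iff ends).mp
        (hz ▸ Finset.mem_union_right _ hyCy)
      exact hxy (connIn_trans ends (connIn_symm ends hzx) hzy)
    have hmemx : Cx ∈ clusters ends σ := Finset.mem_image.mpr ⟨x, Finset.mem_univ x, rfl⟩
    have hmemy : Cy ∈ clusters ends σ := Finset.mem_image.mpr ⟨y, Finset.mem_univ y, rfl⟩
    have hclusters : clusters ends ω' = insert D (clusters ends σ \ {Cx, Cy}) := by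
      ext C
      simp only [clusters, Finset.mem_image, Finset.mem_insert, Finset.mem_sdiff,
        Finset.mem_univ, true_and]
      constructor
      · rintro ⟨z, hz⟩
        by_cases hzD : z ∈ D
        · exact Or.inl (hz ▸ (hclD z hzD).symm ▸ rfl)
        · refine Or.inr ⟨⟨z, (hclO z hzD) ▸ hz⟩, ?_⟩
          rw [← hz, hclO z hzD]
          simp only [Finset.mem_insert, Finset.mem_singleton]
          rintro (hh | hh)
          · have hx' : x ∈ cluster ends σ z := hh.symm ▸ hxCx
            exact hzD (Finset.mem_union_left _ ((mem_cluster_iff ends).mpr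
              (connIn_symm ends ((mem_cluster_iff ends).mp hx'))))
          · have hy' : y ∈ cluster ends σ z := hh.symm ▸ hyCy
            exact hzD (Finset.mem_union_right _ ((mem_cluster_iff ends).mpr
              (connIn_symm ends ((mem_cluster_iff ends).mp hy'))))
      · rintro (rfl | ⟨⟨z, hz⟩, hC⟩)
        · exact ⟨x, hclD x (Finset.mem_union_left _ hxCx)⟩
        · simp only [Finset.mem_insert, Finset.mem_singleton] at hC
          push_neg at hC
          have hzD : z ∉ D := by
            intro hzD
            rcases Finset.mem_union.mp hzD with hh | hh
            · exact hC.1 (by rw [← hz, ← cluster_eq_of_connIn ends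
                ((mem_cluster_iff ends).mp hh)])
            · exact hC.2 (by rw [← hz, ← cluster_eq_of_connIn ends
                ((mem_cluster_iff ends).mp hh)])
          exact ⟨z, (hclO z hzD).trans hz⟩
    have hpairsub : {Cx, Cy} ⊆ clusters ends σ := by
      intro C hC
      rcases Finset.mem_insert.mp hC with rfl | hC
      · exact hmemx
      · exact (Finset.mem_singleton.mp hC) ▸ hmemy
    have hDnotmem : D ∉ clusters ends σ \ {Cx, Cy} :=
      fun hh => hDnot (Finset.mem_sdiff.mp hh).1
    unfold gWired
    rw [hclusters, Finset.prod_insert hDnotmem,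
      ← Finset.prod_sdiff hpairsub, Finset.prod_pair hne]
    rw [mul_comm (∏ C ∈ clusters ends σ \ {Cx, Cy}, thetaW q β h hmax Vb C)]
    refine mul_le_mul_of_nonneg_right (thetaW_union_le m0 hm0 Cx Cy hdisj) ?_
    exact Finset.prod_nonneg fun C _ => (thetaW_pos m0 C).le

end Step

section Main
variable {V E : Type*} [Fintype V] (ends : E → V × V) {q : ℕ} {β : ℝ}
  {h : V → Fin q → ℝ} {hmax : V → ℝ} {Vb : Finset V}

lemma gWired_aux (m0 : Fin q) (hm0 : ∀ x, h x m0 = hmax x) (s : Finset E) :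
    ∀ ω ω' : E → Bool, (∀ e, ω e ≤ ω' e) → (∀ e, ω e ≠ ω' e → e ∈ s) →
      gWired ends q β h hmax Vb ω' ≤ gWired ends q β h hmax Vb ω := by
  induction s using Finset.induction_on with
  | empty =>
    intro ω ω' hle hd
    have : ω = ω' := funext fun e => by
      by_contra hne
      exact absurd (hd e hne) (Finset.notMem_empty e)
    rw [this]
  | @insert a s ha ih =>
    intro ω ω' hle hd
    set ω'' := Function.update ω' a (ω a) with hω''
    have hle1 : ∀ e, ω e ≤ ω'' e := fun e => by
      by_cases he : e = a
      · subst he; simp [ω'']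
      · rw [hω'', Function.update_of_ne he]; exact hle e
    have hd1 : ∀ e, ω e ≠ ω'' e → e ∈ s := fun e hne => by
      by_cases he : e = a
      · subst he; simp [ω''] at hne
      · rw [hω'', Function.update_of_ne he] at hne
        rcases Finset.mem_insert.mp (hd e hne) with rfl | hs
        · exact absurd rfl he
        · exact hs
    have h1 : gWired ends q β h hmax Vb ω'' ≤ gWired ends q β h hmax Vb ω :=
      ih ω ω'' hle1 hd1
    have h2 : gWired ends q β h hmax Vb ω' ≤ gWired ends q β h hmax Vb ω'' := by
      by_cases hae : ω a = ω' a
      · have : ω'' = ω' := by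
          funext e
          by_cases he : e = a
          · subst he; simp [ω'', hae]
          · rw [hω'', Function.update_of_ne he]
        rw [this]
      · have hft : ω a = false ∧ ω' a = true := by
          have := hle a
          cases hh : ω a <;> cases hh' : ω' a <;> simp_all
          exact absurd this (by decide)
        have : ω' = Function.update ω'' a true := by
          funext e
          by_cases he : e = a
          · subst he; simp [hft.2]
          · rw [Function.update_of_ne he, hω'', Function.update_of_ne he]
        rw [this]
        exact gWired_update_le ends m0 hm0 ω'' a
    exact h2.trans h1

end Main


/-- under condition (★) on `V ∪ ∂V`, the function `g^w` is monotone
decreasing. -/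
theorem stmt2 {V E : Type*} [Fintype V] [Fintype E] (ends : E → V × V)
    (Vb : Finset V) (Eb : Finset E) (hbd : BdryCompatible ends Vb Eb)
    (q : ℕ) (hq : 2 ≤ q) (β : ℝ) (hβ : 0 < β)
    (h : V → Fin q → ℝ) (hmax : V → ℝ)
    (hmaxdef : ∀ x, IsGreatest (Set.range (h x)) (hmax x))
    (hstar : ∃ m : Fin q, ∀ x, h x m = hmax x)
    (ω ω' : E → Bool) (hle : ∀ e, ω e ≤ ω' e) :
    gWired ends q β h hmax Vb ω' ≤ gWired ends q β h hmax Vb ω := by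
  obtain ⟨m0, hm0⟩ := hstar
  exact gWired_aux ends m0 hm0 Finset.univ ω ω' hle (fun e _ => Finset.mem_univ e)
end
end

section
/- Assume h_{x,m} > 0 for all x ∈ V and all m ∈ {1,…,q}. Then for every non-negative function f : {0,1}^E → [0,∞), φ^f_{G;β,q,ĥ}(f) ≤ exp(β Σ_{x∈V} h_{x,max}) · φ^f_{G;β,q,0}(f), where 0 denotes the identically zero external field and h_{x,max} := max_{1≤m≤q} h_{x,m}. -/
open Classical Finset

noncomputable section

section MyAux

variable {V E : Type*} [Fintype V] {ends : E → V × V} {ω : E → Bool}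

private lemma myConnIn_symm {x y : V} (hxy : ConnIn ends ω x y) : ConnIn ends ω y x := by
  refine (@Relation.ReflTransGen.stdSymm _ _ ⟨?_⟩).symm _ _ hxy
  rintro a b ⟨e, he, hends⟩
  exact ⟨e, he, hends.symm⟩

private lemma myCluster_eq {x y : V} (hxy : ConnIn ends ω x y) :
    cluster ends ω x = cluster ends ω y := by
  ext z
  simp only [cluster, Finset.mem_filter, Finset.mem_univ, true_and]
  exact ⟨fun hz => (myConnIn_symm hxy).trans hz, fun hz => hxy.trans hz⟩

private lemma myMem_cluster_self (x : V) : x ∈ cluster ends ω x := by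
  simp only [cluster, Finset.mem_filter, Finset.mem_univ, true_and]
  exact Relation.ReflTransGen.refl

private lemma myBiUnion : (clusters ends ω).biUnion id = (Finset.univ : Finset V) := by
  ext x
  simp only [Finset.mem_biUnion, id, Finset.mem_univ, iff_true]
  exact ⟨cluster ends ω x, Finset.mem_image_of_mem _ (Finset.mem_univ x),
    myMem_cluster_self x⟩

private lemma myDisj :
    (↑(clusters ends ω) : Set (Finset V)).PairwiseDisjoint id := by
  intro C hC D hD hCD
  simp only [clusters, Finset.coe_image, Set.mem_image] at hC hD
  obtain ⟨a, -, rfl⟩ := hC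
  obtain ⟨b, -, rfl⟩ := hD
  rw [Function.onFun, id, id, Finset.disjoint_left]
  intro z hza hzb
  simp only [cluster, Finset.mem_filter, Finset.mem_univ, true_and] at hza hzb
  exact hCD (by rw [myCluster_eq hza, myCluster_eq hzb])

private lemma mySum (g : V → ℝ) :
    ∑ C ∈ clusters ends ω, ∑ x ∈ C, g x = ∑ x : V, g x := by
  rw [← myBiUnion (ends := ends) (ω := ω), Finset.sum_biUnion myDisj]
  rfl

end MyAux

/-- for a positive external field, the free measure with field `ĥ` of a
non-negative function is at most `exp(β Σ_{x∈V} h_{x,max})` times the free zero-field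
measure of that function. -/
theorem stmt15 {V E : Type*} [Fintype V] [Fintype E] (ends : E → V × V)
    (q : ℕ) (hq : 2 ≤ q) (β : ℝ) (hβ : 0 < β)
    (J : E → ℝ) (hJ : ∀ e, 0 ≤ J e)
    (h : V → Fin q → ℝ) (hmax : V → ℝ)
    (hpos : ∀ x m, 0 < h x m)
    (hmaxdef : ∀ x, IsGreatest (Set.range (h x)) (hmax x))
    (f : (E → Bool) → ℝ) (hf : ∀ ω, 0 ≤ f ω) :
    freeExp ends q β J h f ≤
      Real.exp (β * ∑ x : V, hmax x) * freeExp ends q β J (fun _ _ => (0 : ℝ)) f := by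
  set K := β * ∑ x : V, hmax x with hKdef
  have hqpos : (0 : ℝ) < q := by exact_mod_cast lt_of_lt_of_le (by norm_num) hq
  -- edge factor nonnegativity
  have hedge : ∀ ω : E → Bool, 0 ≤ edgeFactor q β J ω := by
    intro ω
    apply Finset.prod_nonneg
    intro e _
    by_cases he : ω e <;> simp [he]
    exact mul_nonneg (mul_nonneg hqpos.le hβ.le) (hJ e)
  -- zero-field theta
  have hθ0 : ∀ C : Finset V, thetaF q β (fun _ _ => (0 : ℝ)) C = (q : ℝ) := by
    intro C; simp [thetaF]
  have hg0pos : ∀ ω : E → Bool, 0 < gFree ends q β (fun _ _ => (0 : ℝ)) ω := by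
    intro ω
    apply Finset.prod_pos
    intro C _
    rw [hθ0]; exact hqpos
  -- upper bound on theta
  have hθle : ∀ C : Finset V,
      thetaF q β h C ≤ (q : ℝ) * Real.exp (β * ∑ x ∈ C, hmax x) := by
    intro C
    have step : ∀ m : Fin q,
        Real.exp (β * ∑ x ∈ C, h x m) ≤ Real.exp (β * ∑ x ∈ C, hmax x) := by
      intro m
      apply Real.exp_le_exp.mpr
      apply mul_le_mul_of_nonneg_left _ hβ.le
      exact Finset.sum_le_sum fun x _ => (hmaxdef x).2 ⟨m, rfl⟩
    calc thetaF q β h C ≤ ∑ _m : Fin q, Real.exp (β * ∑ x ∈ C, hmax x) :=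
          Finset.sum_le_sum fun m _ => step m
      _ = (q : ℝ) * Real.exp (β * ∑ x ∈ C, hmax x) := by
          simp [Finset.sum_const, nsmul_eq_mul]
  -- lower bound on theta
  have hθge : ∀ C : Finset V, (q : ℝ) ≤ thetaF q β h C := by
    intro C
    have : ∀ m : Fin q, (1 : ℝ) ≤ Real.exp (β * ∑ x ∈ C, h x m) := by
      intro m
      apply Real.one_le_exp
      exact mul_nonneg hβ.le (Finset.sum_nonneg fun x _ => (hpos x m).le)
    calc (q : ℝ) = ∑ _m : Fin q, (1 : ℝ) := by simp
      _ ≤ thetaF q β h C := Finset.sum_le_sum fun m _ => this m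
  have hθnn : ∀ C : Finset V, 0 ≤ thetaF q β h C := fun C =>
    le_trans hqpos.le (hθge C)
  -- g-comparisons
  have hghle : ∀ ω : E → Bool,
      gFree ends q β h ω ≤ Real.exp K * gFree ends q β (fun _ _ => (0 : ℝ)) ω := by
    intro ω
    have h1 : gFree ends q β h ω ≤
        ∏ C ∈ clusters ends ω, ((q : ℝ) * Real.exp (β * ∑ x ∈ C, hmax x)) :=
      Finset.prod_le_prod (fun C _ => hθnn C) (fun C _ => hθle C)
    have h2 : ∏ C ∈ clusters ends ω, Real.exp (β * ∑ x ∈ C, hmax x) = Real.exp K := by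
      rw [← Real.exp_sum]
      congr 1
      rw [← Finset.mul_sum, mySum]
    calc gFree ends q β h ω
        ≤ ∏ C ∈ clusters ends ω, ((q : ℝ) * Real.exp (β * ∑ x ∈ C, hmax x)) := h1
      _ = (∏ C ∈ clusters ends ω, (q : ℝ)) *
            ∏ C ∈ clusters ends ω, Real.exp (β * ∑ x ∈ C, hmax x) :=
          Finset.prod_mul_distrib
      _ = Real.exp K * gFree ends q β (fun _ _ => (0 : ℝ)) ω := by
          rw [h2, mul_comm]
          congr 1
          simp [gFree, hθ0]
  have hg0le : ∀ ω : E → Bool,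
      gFree ends q β (fun _ _ => (0 : ℝ)) ω ≤ gFree ends q β h ω := by
    intro ω
    apply Finset.prod_le_prod
    · intro C _; rw [hθ0]; exact hqpos.le
    · intro C _; rw [hθ0]; exact hθge C
  -- numerator bound
  have hN : (∑ ω : E → Bool, f ω * freeWeight ends q β J h ω) ≤
      Real.exp K * ∑ ω : E → Bool, f ω * freeWeight ends q β J (fun _ _ => (0 : ℝ)) ω := by
    rw [Finset.mul_sum]
    apply Finset.sum_le_sum
    intro ω _
    have hw : freeWeight ends q β J h ω ≤
        Real.exp K * freeWeight ends q β J (fun _ _ => (0 : ℝ)) ω := by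
      unfold freeWeight
      calc edgeFactor q β J ω * gFree ends q β h ω
          ≤ edgeFactor q β J ω *
              (Real.exp K * gFree ends q β (fun _ _ => (0 : ℝ)) ω) :=
            mul_le_mul_of_nonneg_left (hghle ω) (hedge ω)
        _ = Real.exp K *
              (edgeFactor q β J ω * gFree ends q β (fun _ _ => (0 : ℝ)) ω) := by ring
    calc f ω * freeWeight ends q β J h ω
        ≤ f ω * (Real.exp K * freeWeight ends q β J (fun _ _ => (0 : ℝ)) ω) :=
          mul_le_mul_of_nonneg_left hw (hf ω)
      _ = Real.exp K * (f ω * freeWeight ends q β J (fun _ _ => (0 : ℝ)) ω) := by ring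
  -- denominator bounds
  have hD : (∑ ω : E → Bool, freeWeight ends q β J (fun _ _ => (0 : ℝ)) ω) ≤
      ∑ ω : E → Bool, freeWeight ends q β J h ω :=
    Finset.sum_le_sum fun ω _ =>
      mul_le_mul_of_nonneg_left (hg0le ω) (hedge ω)
  have hDpos : 0 < ∑ ω : E → Bool, freeWeight ends q β J (fun _ _ => (0 : ℝ)) ω := by
    apply Finset.sum_pos'
    · intro ω _
      exact mul_nonneg (hedge ω) (hg0pos ω).le
    · refine ⟨fun _ => false, Finset.mem_univ _, ?_⟩
      have he1 : edgeFactor q β J (fun _ => false) = 1 := by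
        simp [edgeFactor]
      unfold freeWeight
      rw [he1, one_mul]
      exact hg0pos _
  have hN0nn : 0 ≤ ∑ ω : E → Bool, f ω * freeWeight ends q β J (fun _ _ => (0 : ℝ)) ω :=
    Finset.sum_nonneg fun ω _ =>
      mul_nonneg (hf ω) (mul_nonneg (hedge ω) (hg0pos ω).le)
  unfold freeExp
  calc (∑ ω : E → Bool, f ω * freeWeight ends q β J h ω) /
        ∑ ω : E → Bool, freeWeight ends q β J h ω
      ≤ (Real.exp K * ∑ ω : E → Bool, f ω * freeWeight ends q β J (fun _ _ => (0 : ℝ)) ω) /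
        ∑ ω : E → Bool, freeWeight ends q β J (fun _ _ => (0 : ℝ)) ω :=
        div_le_div₀ (mul_nonneg (Real.exp_pos K).le hN0nn) hN hDpos hD
    _ = Real.exp K *
        ((∑ ω : E → Bool, f ω * freeWeight ends q β J (fun _ _ => (0 : ℝ)) ω) /
          ∑ ω : E → Bool, freeWeight ends q β J (fun _ _ => (0 : ℝ)) ω) :=
        mul_div_assoc _ _ _
end
end
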